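/- For pointed topological spaces $A$, $B$, $Y$, there is a homeomorphism between the right half-smash $(A\vee B)\rtimes Y$ and the wedge $(A\rtimes Y)\vee(B\rtimes Y)$, where the wedge point of $A\vee B$ is the common basepoint. -/

import Mathlib

noncomputable section

open Topology

/-- The relation generating the wedge `A ∨ B`: identify the two basepoints. -/
def WedgeRel {A B : Type} (a0 : A) (b0 : B) : A ⊕ B → A ⊕ B → Prop := fun x y =>
  x = Sum.inl a0 ∧ y = Sum.inr b0

/-- The wedge sum `A ∨ B` of two pointed spaces. -/
def Wedge (A B : Type) [TopologicalSpace A] [TopologicalSpace B] (a0 : A) (b0 : B) : Type :=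
  Quot (WedgeRel a0 b0)

instance {A B : Type} [TopologicalSpace A] [TopologicalSpace B] (a0 : A) (b0 : B) :
    TopologicalSpace (Wedge A B a0 b0) :=
  inferInstanceAs (TopologicalSpace (Quot (WedgeRel a0 b0)))

/-- The basepoint of the wedge `A ∨ B`. -/
def wedgePt {A B : Type} [TopologicalSpace A] [TopologicalSpace B] (a0 : A) (b0 : B) :
    Wedge A B a0 b0 :=
  Quot.mk _ (Sum.inl a0)

/-- The relation generating the right half-smash `A ⋊ Y`: collapse `{a₀} × Y` to a point. -/
def HalfSmashRel {A Y : Type} (a0 : A) : A × Y → A × Y → Prop := fun p q =>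
  p.1 = a0 ∧ q.1 = a0

/-- The right half-smash `A ⋊ Y = (A × Y)/({a₀} × Y)`. -/
def HalfSmash (A Y : Type) [TopologicalSpace A] [TopologicalSpace Y] (a0 : A) : Type :=
  Quot (HalfSmashRel (Y := Y) a0)

instance {A Y : Type} [TopologicalSpace A] [TopologicalSpace Y] (a0 : A) :
    TopologicalSpace (HalfSmash A Y a0) :=
  inferInstanceAs (TopologicalSpace (Quot (HalfSmashRel (Y := Y) a0)))

/-- The basepoint of the right half-smash: the collapsed copy of `{a₀} × Y`. -/
def halfSmashPt {A Y : Type} [TopologicalSpace A] [TopologicalSpace Y] (a0 : A) (y0 : Y) :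
    HalfSmash A Y a0 :=
  Quot.mk _ (a0, y0)

namespace HSWAux

variable {A B Y : Type} [TopologicalSpace A] [TopologicalSpace B] [TopologicalSpace Y]

/-- The equivalence closure of `WedgeRel` only identifies the two basepoints. -/
lemma wedgeRel_eqvGen (a0 : A) (b0 : B) {x y : A ⊕ B}
    (h : Relation.EqvGen (WedgeRel a0 b0) x y) :
    x = y ∨ ((x = Sum.inl a0 ∨ x = Sum.inr b0) ∧ (y = Sum.inl a0 ∨ y = Sum.inr b0)) := by
  induction h with
  | rel _ _ h => exact Or.inr ⟨Or.inl h.1, Or.inr h.2⟩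
  | refl _ => exact Or.inl rfl
  | symm _ _ _ ih => tauto
  | trans x y z _ _ ih1 ih2 =>
      rcases ih1 with rfl | h1
      · exact ih2
      · rcases ih2 with rfl | h2
        · exact Or.inr h1
        · exact Or.inr ⟨h1.1, h2.2⟩

/-- The canonical composite map `(A ⊕ B) × Y → (A ∨ B) ⋊ Y`. -/
def pi (a0 : A) (b0 : B) : (A ⊕ B) × Y → HalfSmash (Wedge A B a0 b0) Y (wedgePt a0 b0) :=
  fun x => Quot.mk (HalfSmashRel (Y := Y) (wedgePt a0 b0)) (Quot.mk (WedgeRel a0 b0) x.1, x.2)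

lemma pi_continuous (a0 : A) (b0 : B) : Continuous (pi (Y := Y) a0 b0) :=
  continuous_quot_mk.comp ((continuous_quot_mk.comp continuous_fst).prodMk continuous_snd)

lemma mk_base_eq (a0 : A) (b0 : B) :
    Quot.mk (WedgeRel a0 b0) (Sum.inl a0 : A ⊕ B) = Quot.mk (WedgeRel a0 b0) (Sum.inr b0) :=
  Quot.sound ⟨rfl, rfl⟩

/-- The key point-set topology fact: `pi` is a quotient map, even though
`q × id` need not be one in general. -/
lemma pi_isQuotientMap (a0 : A) (b0 : B) : IsQuotientMap (pi (Y := Y) a0 b0) := by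
  suffices h : Function.Surjective (pi (Y := Y) a0 b0) ∧
      ∀ s, IsOpen s ↔ IsOpen (pi (Y := Y) a0 b0 ⁻¹' s) from
    ⟨isCoinducing_iff.mpr fun s => (h.2 s).symm, h.1⟩
  constructor
  · intro l
    obtain ⟨⟨w, y⟩, rfl⟩ := Quot.exists_rep l
    obtain ⟨x, rfl⟩ := Quot.exists_rep w
    exact ⟨(x, y), rfl⟩
  · intro s
    refine ⟨fun hs => hs.preimage (pi_continuous a0 b0), fun hP => ?_⟩
    apply (isQuotientMap_quot_mk (r := HalfSmashRel (Y := Y) (wedgePt a0 b0))).isOpen_preimage.mp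
    rw [isOpen_prod_iff]
    intro w y hwy
    obtain ⟨x, rfl⟩ := Quot.exists_rep w
    set P : Set ((A ⊕ B) × Y) := pi (Y := Y) a0 b0 ⁻¹' s with hPdef
    have hxy : (x, y) ∈ P := hwy
    have hsat : ∀ y' : Y, (((Sum.inl a0 : A ⊕ B), y') ∈ P ↔ ((Sum.inr b0 : A ⊕ B), y') ∈ P) := by
      intro y'
      have hkey : pi (Y := Y) a0 b0 (Sum.inr b0, y') = pi (Y := Y) a0 b0 (Sum.inl a0, y') := by
        unfold pi
        rw [← mk_base_eq a0 b0]
      constructor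
      · intro h
        show pi (Y := Y) a0 b0 (Sum.inr b0, y') ∈ s
        rw [hkey]; exact h
      · intro h
        have h' : pi (Y := Y) a0 b0 (Sum.inr b0, y') ∈ s := h
        rw [hkey] at h'; exact h'
    by_cases hb : ((Sum.inl a0 : A ⊕ B), y) ∈ P
    · -- basepoint in the closure of the picture: enlarge to a saturated box
      have hb' : ((Sum.inr b0 : A ⊕ B), y) ∈ P := (hsat y).mp hb
      obtain ⟨U1, O1, hU1, hO1, hx1, hy1, hs1⟩ := (isOpen_prod_iff.mp hP) x y hxy
      obtain ⟨Ua, Oa, hUa, hOa, hxa, hya, hsa⟩ := (isOpen_prod_iff.mp hP) _ y hb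
      obtain ⟨Ub, Ob, hUb, hOb, hxb, hyb, hsb⟩ := (isOpen_prod_iff.mp hP) _ y hb'
      refine ⟨Quot.mk (WedgeRel a0 b0) '' (U1 ∪ Ua ∪ Ub), O1 ∩ Oa ∩ Ob, ?_, ?_,
        ⟨x, Or.inl (Or.inl hx1), rfl⟩, ⟨⟨hy1, hya⟩, hyb⟩, ?_⟩
      · apply (isQuotientMap_quot_mk (r := WedgeRel a0 b0)).isOpen_preimage.mp
        have heq : Quot.mk (WedgeRel a0 b0) ⁻¹'
            (Quot.mk (WedgeRel a0 b0) '' (U1 ∪ Ua ∪ Ub)) = U1 ∪ Ua ∪ Ub := by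
          ext z
          constructor
          · rintro ⟨z', hz', hzz⟩
            rcases wedgeRel_eqvGen a0 b0 (Quot.eq.mp hzz) with rfl | ⟨_, h2⟩
            · exact hz'
            · rcases h2 with rfl | rfl
              · exact Or.inl (Or.inr hxa)
              · exact Or.inr hxb
          · intro hz; exact ⟨z, hz, rfl⟩
        erw [heq]
        exact (hU1.union hUa).union hUb
      · exact (hO1.inter hOa).inter hOb
      · rintro ⟨w', y'⟩ ⟨⟨z, hz, rfl⟩, hy'⟩
        show (z, y') ∈ P
        rcases hz with (hz | hz) | hz
        · exact hs1 ⟨hz, hy'.1.1⟩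
        · exact hsa ⟨hz, hy'.1.2⟩
        · exact hsb ⟨hz, hy'.2⟩
    · -- away from the basepoint: the box stays saturated
      obtain ⟨U1, O1, hU1, hO1, hx1, hy1, hs1⟩ := (isOpen_prod_iff.mp hP) x y hxy
      have ha1 : (Sum.inl a0 : A ⊕ B) ∉ U1 := fun h => hb (hs1 ⟨h, hy1⟩)
      have hb1 : (Sum.inr b0 : A ⊕ B) ∉ U1 := fun h => hb ((hsat y).mpr (hs1 ⟨h, hy1⟩))
      refine ⟨Quot.mk (WedgeRel a0 b0) '' U1, O1, ?_, hO1, ⟨x, hx1, rfl⟩, hy1, ?_⟩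
      · apply (isQuotientMap_quot_mk (r := WedgeRel a0 b0)).isOpen_preimage.mp
        have heq : Quot.mk (WedgeRel a0 b0) ⁻¹' (Quot.mk (WedgeRel a0 b0) '' U1) = U1 := by
          ext z
          constructor
          · rintro ⟨z', hz', hzz⟩
            rcases wedgeRel_eqvGen a0 b0 (Quot.eq.mp hzz) with rfl | ⟨h1, _⟩
            · exact hz'
            · rcases h1 with rfl | rfl
              · exact absurd hz' ha1
              · exact absurd hz' hb1
          · intro hz; exact ⟨z, hz, rfl⟩
        erw [heq]
        exact hU1
      · rintro ⟨w', y'⟩ ⟨⟨z, hz, rfl⟩, hy'⟩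
        show (z, y') ∈ P
        exact hs1 ⟨hz, hy'⟩

variable (a0 : A) (b0 : B) (y0 : Y)

/-- Backward map `(A ⋊ Y) ∨ (B ⋊ Y) → (A ∨ B) ⋊ Y`. -/
def fwd : Wedge (HalfSmash A Y a0) (HalfSmash B Y b0) (halfSmashPt a0 y0) (halfSmashPt b0 y0) →
    HalfSmash (Wedge A B a0 b0) Y (wedgePt a0 b0) :=
  Quot.lift
    (Sum.elim
      (Quot.lift (fun p : A × Y => Quot.mk _ (Quot.mk (WedgeRel a0 b0) (Sum.inl p.1), p.2))
        (by
          rintro ⟨pa, py⟩ ⟨qa, qy⟩ ⟨hp, hq⟩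
          dsimp at hp hq ⊢
          exact Quot.sound ⟨by rw [hp]; rfl, by rw [hq]; rfl⟩))
      (Quot.lift (fun p : B × Y => Quot.mk _ (Quot.mk (WedgeRel a0 b0) (Sum.inr p.1), p.2))
        (by
          rintro ⟨pb, py⟩ ⟨qb, qy⟩ ⟨hp, hq⟩
          dsimp at hp hq ⊢
          exact Quot.sound ⟨by rw [hp]; exact (mk_base_eq a0 b0).symm,
            by rw [hq]; exact (mk_base_eq a0 b0).symm⟩)))
    (by
      rintro x y ⟨hx, hy⟩
      subst hx; subst hy
      show Quot.mk _ (Quot.mk (WedgeRel a0 b0) (Sum.inl a0), y0) =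
        Quot.mk _ (Quot.mk (WedgeRel a0 b0) (Sum.inr b0), y0)
      rw [← mk_base_eq a0 b0])

/-- Forward map `(A ∨ B) ⋊ Y → (A ⋊ Y) ∨ (B ⋊ Y)`. -/
def bwd : HalfSmash (Wedge A B a0 b0) Y (wedgePt a0 b0) →
    Wedge (HalfSmash A Y a0) (HalfSmash B Y b0) (halfSmashPt a0 y0) (halfSmashPt b0 y0) :=
  Quot.lift
    (fun p =>
      Quot.lift
        (Sum.elim
          (fun a => Quot.mk _ (Sum.inl (Quot.mk (HalfSmashRel (Y := Y) a0) (a, p.2))))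
          (fun b => Quot.mk _ (Sum.inr (Quot.mk (HalfSmashRel (Y := Y) b0) (b, p.2)))))
        (by
          rintro x y ⟨hx, hy⟩
          subst hx; subst hy
          show Quot.mk _ (Sum.inl (Quot.mk (HalfSmashRel (Y := Y) a0) (a0, p.2))) =
            Quot.mk _ (Sum.inr (Quot.mk (HalfSmashRel (Y := Y) b0) (b0, p.2)))
          have h1 : Quot.mk (HalfSmashRel (Y := Y) a0) (a0, p.2) = halfSmashPt a0 y0 :=
            Quot.sound ⟨rfl, rfl⟩
          have h2 : Quot.mk (HalfSmashRel (Y := Y) b0) (b0, p.2) = halfSmashPt b0 y0 :=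
            Quot.sound ⟨rfl, rfl⟩
          rw [h1, h2]
          exact Quot.sound ⟨rfl, rfl⟩)
        p.1)
    (by
      rintro ⟨pw, py⟩ ⟨qw, qy⟩ ⟨hp, hq⟩
      dsimp at hp hq ⊢
      subst hp; subst hq
      show Quot.mk _ (Sum.inl (Quot.mk (HalfSmashRel (Y := Y) a0) (a0, py))) =
        Quot.mk _ (Sum.inl (Quot.mk (HalfSmashRel (Y := Y) a0) (a0, qy)))
      rw [Quot.sound (r := HalfSmashRel (Y := Y) a0) (⟨rfl, rfl⟩ :
        HalfSmashRel a0 (a0, py) (a0, qy))])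

lemma bwd_pi (x : (A ⊕ B) × Y) :
    bwd a0 b0 y0 (pi (Y := Y) a0 b0 x) =
      Sum.elim
        (fun p : A × Y => Quot.mk (WedgeRel (halfSmashPt a0 y0) (halfSmashPt b0 y0))
          (Sum.inl (Quot.mk (HalfSmashRel (Y := Y) a0) p)))
        (fun p : B × Y => Quot.mk (WedgeRel (halfSmashPt a0 y0) (halfSmashPt b0 y0))
          (Sum.inr (Quot.mk (HalfSmashRel (Y := Y) b0) p)))
        ((Homeomorph.sumProdDistrib : (A ⊕ B) × Y ≃ₜ (A × Y) ⊕ (B × Y)) x) := by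
  obtain ⟨x1, y⟩ := x
  cases x1 <;> rfl

lemma bwd_continuous : Continuous (bwd (Y := Y) a0 b0 y0) := by
  rw [(pi_isQuotientMap (Y := Y) a0 b0).continuous_iff]
  have : (bwd a0 b0 y0) ∘ (pi (Y := Y) a0 b0) =
      (Sum.elim
        (fun p : A × Y => Quot.mk (WedgeRel (halfSmashPt a0 y0) (halfSmashPt b0 y0))
          (Sum.inl (Quot.mk (HalfSmashRel (Y := Y) a0) p)))
        (fun p : B × Y => Quot.mk (WedgeRel (halfSmashPt a0 y0) (halfSmashPt b0 y0))
          (Sum.inr (Quot.mk (HalfSmashRel (Y := Y) b0) p)))) ∘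
      (Homeomorph.sumProdDistrib : (A ⊕ B) × Y ≃ₜ (A × Y) ⊕ (B × Y)) := by
    funext x
    exact bwd_pi a0 b0 y0 x
  rw [this]
  exact (Continuous.sumElim
      (continuous_quot_mk.comp ((continuous_inl (X := HalfSmash A Y a0) (Y := HalfSmash B Y b0)).comp continuous_quot_mk))
      (continuous_quot_mk.comp ((continuous_inr (X := HalfSmash A Y a0) (Y := HalfSmash B Y b0)).comp continuous_quot_mk))).comp
    (Homeomorph.sumProdDistrib).continuous

lemma fwd_continuous : Continuous (fwd (Y := Y) a0 b0 y0) := by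
  apply continuous_quot_lift
  apply Continuous.sumElim
  · apply continuous_quot_lift
    exact continuous_quot_mk.comp
      ((continuous_quot_mk.comp (continuous_inl.comp continuous_fst)).prodMk continuous_snd)
  · apply continuous_quot_lift
    exact continuous_quot_mk.comp
      ((continuous_quot_mk.comp (continuous_inr.comp continuous_fst)).prodMk continuous_snd)

lemma fwd_bwd (l : HalfSmash (Wedge A B a0 b0) Y (wedgePt a0 b0)) :
    fwd a0 b0 y0 (bwd a0 b0 y0 l) = l := by
  obtain ⟨⟨w, y⟩, rfl⟩ := Quot.exists_rep l
  obtain ⟨x, rfl⟩ := Quot.exists_rep w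
  cases x <;> rfl

lemma bwd_fwd
    (r : Wedge (HalfSmash A Y a0) (HalfSmash B Y b0) (halfSmashPt a0 y0) (halfSmashPt b0 y0)) :
    bwd a0 b0 y0 (fwd a0 b0 y0 r) = r := by
  obtain ⟨x, rfl⟩ := Quot.exists_rep r
  cases x with
  | inl h => obtain ⟨p, rfl⟩ := Quot.exists_rep h; rfl
  | inr h => obtain ⟨p, rfl⟩ := Quot.exists_rep h; rfl

end HSWAux

/-- `(A ∨ B) ⋊ Y` is homeomorphic to `(A ⋊ Y) ∨ (B ⋊ Y)`. -/
theorem halfSmash_wedge_homeomorph (A B Y : Type)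
    [TopologicalSpace A] [TopologicalSpace B] [TopologicalSpace Y]
    (a0 : A) (b0 : B) (y0 : Y) :
    Nonempty
      ((HalfSmash (Wedge A B a0 b0) Y (wedgePt a0 b0)) ≃ₜ
        (Wedge (HalfSmash A Y a0) (HalfSmash B Y b0) (halfSmashPt a0 y0) (halfSmashPt b0 y0))) :=
  ⟨{ toFun := HSWAux.bwd a0 b0 y0
     invFun := HSWAux.fwd a0 b0 y0
     left_inv := HSWAux.fwd_bwd a0 b0 y0
     right_inv := HSWAux.bwd_fwd a0 b0 y0
     continuous_toFun := HSWAux.bwd_continuous a0 b0 y0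
     continuous_invFun := HSWAux.fwd_continuous a0 b0 y0 }⟩
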